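/- There exist υ₀ > 0 and ε* > 0 such that for every m ∈ [3,7], every ε ∈ (0,ε*), and every υ > 0 such that iυ is a root of the polynomial λ ↦ P₇(λ;m,ε), one has υ < υ₀. -/
import Mathlib


open Complex

/-- Coefficient a₀ of P₇. -/
noncomputable def a0 (m ε : ℝ) : ℝ := 2 ^ 11 * (ε - 1) ^ 4 * ε ^ 2

/-- Coefficient a₁ of P₇. -/
noncomputable def a1 (m ε : ℝ) : ℝ :=
  -2 ^ 11 * (ε ^ 2 - ε) ^ 2 *
    ((5 * ε ^ 2 - 2 * ε + 1) * m ^ 2 + 2 * (ε + 1) ^ 2 * m + 4)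

/-- Coefficient a₂ of P₇. -/
noncomputable def a2 (m ε : ℝ) : ℝ :=
  (ε ^ 2 - ε) *
    (ε * (59 * ε ^ 3 - 9 * ε ^ 2 + 17 * ε - 3) * m ^ 4 +
     4 * ε * (15 * ε ^ 3 + 15 * ε ^ 2 + 17 * ε + 1) * m ^ 3 +
     4 * (ε + 2) * (ε ^ 3 + 9 * ε ^ 2 + 5 * ε + 1) * m ^ 2 -
     8 * (2 * ε ^ 3 - 3 * ε ^ 2 - 4 * ε - 3) * m - 8 * (ε - 1) * (ε + 2))

/-- Coefficient a₃ of P₇. -/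
noncomputable def a3 (m ε : ℝ) : ℝ :=
  2 ^ 7 *
    (-(ε ^ 2) * (5 * ε - 1) * (9 * ε ^ 3 + ε ^ 2 + 7 * ε - 1) * m ^ 6 -
     2 * ε ^ 2 * (59 * ε ^ 4 - 8 * ε ^ 3 + 74 * ε ^ 2 + 8 * ε - 5) * m ^ 5 -
     4 * ε * (4 * ε ^ 5 + 27 * ε ^ 4 + 24 * ε ^ 3 + 37 * ε ^ 2 + 6 * ε - 2) * m ^ 4 +
     4 * ε * (4 * ε ^ 5 + 20 * ε ^ 4 - 31 * ε ^ 3 - 23 * ε ^ 2 - 33 * ε - 1) * m ^ 3 +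
     4 * (9 * ε ^ 5 + 27 * ε ^ 4 - 15 * ε ^ 3 - 24 * ε ^ 2 - 12 * ε - 1) * m ^ 2 +
     4 * (ε ^ 4 + 17 * ε ^ 3 - 7 * ε ^ 2 - 9 * ε - 2) * m -
     4 * (ε - 1) ^ 2 * (2 * ε + 1))

/-- Coefficient a₄ of P₇. -/
noncomputable def a4 (m ε : ℝ) : ℝ :=
  2 ^ 3 *
    (ε ^ 2 * (9 * ε - 1) ^ 2 * (ε - 1) ^ 2 * m ^ 8 +
     8 * ε ^ 2 * (ε - 1) * (45 * ε ^ 3 + 5 * ε ^ 2 - 21 * ε + 3) * m ^ 7 +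
     8 * ε * (21 * ε ^ 5 - 58 * ε ^ 4 - 84 * ε ^ 3 - 32 * ε ^ 2 + 27 * ε - 2) * m ^ 6 -
     16 * ε * (34 * ε ^ 5 + 42 * ε ^ 4 + 113 * ε ^ 3 + 81 * ε ^ 2 - 7 * ε - 7) * m ^ 5 -
     16 * (7 * ε ^ 6 + 96 * ε ^ 5 + 75 * ε ^ 4 + 176 * ε ^ 3 + 42 * ε ^ 2 - 10 * ε - 2) * m ^ 4 +
     16 * ε * (6 * ε ^ 4 - 75 * ε ^ 3 - 65 * ε ^ 2 - 117 * ε - 5) * m ^ 3 +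
     16 * (29 * ε ^ 4 - 7 * ε ^ 3 - 48 * ε ^ 2 - 31 * ε - 7) * m ^ 2 +
     32 * (ε - 1) * (7 * ε ^ 2 + 14 * ε + 3) * m - 16 * (ε - 1) ^ 2)

/-- Coefficient a₅ of P₇. -/
noncomputable def a5 (m ε : ℝ) : ℝ :=
  2 ^ 5 * m *
    (ε ^ 2 * (ε - 1) ^ 2 * (9 * ε ^ 2 + ε - 2) * m ^ 7 +
     (ε ^ 2 - ε) * (38 * ε ^ 4 + 46 * ε ^ 3 - 39 * ε ^ 2 + 3) * m ^ 6 +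
     (36 * ε ^ 6 + 33 * ε ^ 5 - 123 * ε ^ 4 - 95 * ε ^ 3 + 54 * ε ^ 2 - 1) * m ^ 5 -
     (8 * ε ^ 6 - 8 * ε ^ 5 + 169 * ε ^ 4 + 233 * ε ^ 3 + 25 * ε ^ 2 - 41 * ε - 2) * m ^ 4 -
     (60 * ε ^ 5 + 110 * ε ^ 4 + 320 * ε ^ 3 + 129 * ε ^ 2 - 22 * ε - 21) * m ^ 3 -
     4 * (16 * ε ^ 4 + 37 * ε ^ 3 + 41 * ε ^ 2 + 7 * ε - 5) * m ^ 2 +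
     2 * (4 * ε ^ 3 - 37 * ε ^ 2 - 10 * ε - 5) * m + 4 * (5 * ε ^ 2 - 2 * ε - 3))

/-- Coefficient a₆ of P₇. -/
noncomputable def a6 (m ε : ℝ) : ℝ :=
  2 ^ 3 * m *
    (2 * ε ^ 2 * (ε - 1) ^ 2 * (ε + 1) * (2 * ε - 1) * m ^ 7 +
     (ε ^ 2 - ε) * (16 * ε ^ 4 + 58 * ε ^ 3 - 19 * ε ^ 2 - 10 * ε + 3) * m ^ 6 +
     (16 * ε ^ 6 + 72 * ε ^ 5 - 39 * ε ^ 4 - 171 * ε ^ 3 + 42 * ε ^ 2 + 17 * ε - 1) * m ^ 5 +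
     2 * (20 * ε ^ 5 - 12 * ε ^ 4 - 113 * ε ^ 3 - 69 * ε ^ 2 + 41 * ε + 5) * m ^ 4 -
     (2 * ε + 1) * (18 * ε ^ 3 + 81 * ε ^ 2 + 80 * ε - 51) * m ^ 3 -
     4 * (28 * ε ^ 3 + 31 * ε ^ 2 + 20 * ε - 15) * m ^ 2 -
     4 * (11 * ε - 3) * (ε + 1) * m - 8 * (1 - ε))

/-- Coefficient a₇ of P₇. -/
noncomputable def a7 (m ε : ℝ) : ℝ :=
  2 ^ 4 * (m ^ 2 + m ^ 3) *
    (ε ^ 2 * (ε ^ 2 - 1) * (2 * ε - 1) * m ^ 4 +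
     ε * (2 * ε - 1) * (3 * ε ^ 2 - 3 * ε - 2) * m ^ 3 +
     (2 * ε ^ 4 - 13 * ε ^ 2 + 4 * ε + 1) * m ^ 2 -
     3 * (2 * ε - 1) * (ε + 1) * m + 2 * (1 - 2 * ε))

/-- The seventh-order polynomial P₇(λ;m,ε). -/
noncomputable def P7 (m ε : ℝ) (l : ℂ) : ℂ :=
  (a0 m ε : ℂ) * l ^ 7 + (a1 m ε : ℂ) * l ^ 6 + (a2 m ε : ℂ) * l ^ 5 +
  (a3 m ε : ℂ) * l ^ 4 + (a4 m ε : ℂ) * l ^ 3 + (a5 m ε : ℂ) * l ^ 2 +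
  (a6 m ε : ℂ) * l + (a7 m ε : ℂ)

/- Auxiliary lemmas -/


set_option maxHeartbeats 800000

lemma epows {ε : ℝ} (he0 : 0 < ε) (he1 : ε < 1/1000000) :
    ε ^ 2 ≤ 1/1000000 * ε ∧ ε ^ 3 ≤ ε ^ 2 ∧ ε ^ 4 ≤ ε ^ 2 ∧ ε ^ 5 ≤ ε ^ 2 ∧ ε ^ 6 ≤ ε ^ 2 := by
  have he : ε ≤ 1 := by linarith
  have hk : ∀ k : ℕ, 2 ≤ k → ε ^ k ≤ ε ^ 2 := fun k hk =>
    pow_le_pow_of_le_one he0.le he hk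
  exact ⟨by nlinarith, hk 3 (by norm_num), hk 4 (by norm_num), hk 5 (by norm_num), hk 6 (by norm_num)⟩

lemma w3 {ε : ℝ} (he0 : 0 < ε) (he1 : ε < 1/1000000) :
    (-3:ℝ) ≤ 21 * ε ^ 5 - 58 * ε ^ 4 - 84 * ε ^ 3 - 32 * ε ^ 2 + 27 * ε - 2 := by
  obtain ⟨h2, h3, h4, h5, h6⟩ := epows he0 he1
  nlinarith [pow_nonneg he0.le 5]

lemma w4 {ε : ℝ} (he0 : 0 < ε) (he1 : ε < 1/1000000) :
    34 * ε ^ 5 + 42 * ε ^ 4 + 113 * ε ^ 3 + 81 * ε ^ 2 - 7 * ε - 7 ≤ 0 := by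
  obtain ⟨h2, h3, h4, h5, h6⟩ := epows he0 he1
  nlinarith

lemma w5 {ε : ℝ} (he0 : 0 < ε) (he1 : ε < 1/1000000) :
    7 * ε ^ 6 + 96 * ε ^ 5 + 75 * ε ^ 4 + 176 * ε ^ 3 + 42 * ε ^ 2 - 10 * ε - 2 ≤ -(15/8) := by
  obtain ⟨h2, h3, h4, h5, h6⟩ := epows he0 he1
  nlinarith

lemma w6 {ε : ℝ} (he0 : 0 < ε) (he1 : ε < 1/1000000) :
    (-6:ℝ) ≤ 6 * ε ^ 4 - 75 * ε ^ 3 - 65 * ε ^ 2 - 117 * ε - 5 := by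
  obtain ⟨h2, h3, h4, h5, h6⟩ := epows he0 he1
  nlinarith [pow_nonneg he0.le 4]

lemma w7 {ε : ℝ} (he0 : 0 < ε) (he1 : ε < 1/1000000) :
    (-8:ℝ) ≤ 29 * ε ^ 4 - 7 * ε ^ 3 - 48 * ε ^ 2 - 31 * ε - 7 := by
  obtain ⟨h2, h3, h4, h5, h6⟩ := epows he0 he1
  nlinarith [pow_nonneg he0.le 4]

lemma w8 {ε : ℝ} (he0 : 0 < ε) (he1 : ε < 1/1000000) :
    (-4:ℝ) ≤ (ε - 1) * (7 * ε ^ 2 + 14 * ε + 3) := by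
  obtain ⟨h2, h3, h4, h5, h6⟩ := epows he0 he1
  nlinarith [mul_nonneg (mul_nonneg he0.le he0.le) he0.le]

lemma lbAux {c p clo phi : ℝ} (h1 : clo ≤ c) (h2 : clo ≤ 0) (h3 : 0 ≤ p) (h4 : p ≤ phi) :
    clo * phi ≤ c * p := by nlinarith

lemma hA4x {m ε : ℝ} (hm1 : 3 ≤ m) (hm2 : m ≤ 7) (he0 : 0 < ε) (he1 : ε < 1/1000000) :
    (8:ℝ) ≤
    (ε ^ 2 * (9 * ε - 1) ^ 2 * (ε - 1) ^ 2 * m ^ 8 +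
     8 * ε ^ 2 * (ε - 1) * (45 * ε ^ 3 + 5 * ε ^ 2 - 21 * ε + 3) * m ^ 7 +
     8 * ε * (21 * ε ^ 5 - 58 * ε ^ 4 - 84 * ε ^ 3 - 32 * ε ^ 2 + 27 * ε - 2) * m ^ 6 -
     16 * ε * (34 * ε ^ 5 + 42 * ε ^ 4 + 113 * ε ^ 3 + 81 * ε ^ 2 - 7 * ε - 7) * m ^ 5 -
     16 * (7 * ε ^ 6 + 96 * ε ^ 5 + 75 * ε ^ 4 + 176 * ε ^ 3 + 42 * ε ^ 2 - 10 * ε - 2) * m ^ 4 +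
     16 * ε * (6 * ε ^ 4 - 75 * ε ^ 3 - 65 * ε ^ 2 - 117 * ε - 5) * m ^ 3 +
     16 * (29 * ε ^ 4 - 7 * ε ^ 3 - 48 * ε ^ 2 - 31 * ε - 7) * m ^ 2 +
     32 * (ε - 1) * (7 * ε ^ 2 + 14 * ε + 3) * m - 16 * (ε - 1) ^ 2) := by
  have hm0 : (0:ℝ) < m := by linarith
  have he : ε ≤ 1 := by linarith
  have hm9 : (9:ℝ) ≤ m ^ 2 := by nlinarith
  have hp7 : m ^ 7 ≤ 823543 := by calc m ^ 7 ≤ 7 ^ 7 := pow_le_pow_left₀ hm0.le hm2 7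
                                    _ = 823543 := by norm_num
  have hp6 : m ^ 6 ≤ 117649 := by calc m ^ 6 ≤ 7 ^ 6 := pow_le_pow_left₀ hm0.le hm2 6
                                    _ = 117649 := by norm_num
  have hp3 : m ^ 3 ≤ 343 := by calc m ^ 3 ≤ 7 ^ 3 := pow_le_pow_left₀ hm0.le hm2 3
                                    _ = 343 := by norm_num
  have t1 : 0 ≤ ε ^ 2 * (9 * ε - 1) ^ 2 * (ε - 1) ^ 2 * m ^ 8 := by positivity
  have t2 : (-1:ℝ) ≤ 8 * ε ^ 2 * (ε - 1) * (45 * ε ^ 3 + 5 * ε ^ 2 - 21 * ε + 3) * m ^ 7 := by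
    have hc : -(1/1000000 : ℝ) ≤ 8 * ε ^ 2 * (ε - 1) * (45 * ε ^ 3 + 5 * ε ^ 2 - 21 * ε + 3) := by
      have hi1 : 45 * ε ^ 3 + 5 * ε ^ 2 - 21 * ε + 3 ≤ 4 := by nlinarith
      have hi2 : 0 ≤ 45 * ε ^ 3 + 5 * ε ^ 2 - 21 * ε + 3 := by nlinarith
      have he2 : ε ^ 2 ≤ 1/1000000 * ε := by nlinarith
      nlinarith [mul_nonneg (sq_nonneg ε) hi2, sq_nonneg ε]
    nlinarith [lbAux hc (by norm_num) (pow_nonneg hm0.le 7) hp7]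
  have t3 : (-3:ℝ) ≤ 8 * ε * (21 * ε ^ 5 - 58 * ε ^ 4 - 84 * ε ^ 3 - 32 * ε ^ 2 + 27 * ε - 2) * m ^ 6 := by
    have hc : -(3/125000 : ℝ) ≤ 8 * ε * (21 * ε ^ 5 - 58 * ε ^ 4 - 84 * ε ^ 3 - 32 * ε ^ 2 + 27 * ε - 2) := by
      nlinarith [w3 he0 he1, mul_nonneg he0.le he0.le]
    nlinarith [lbAux hc (by norm_num) (pow_nonneg hm0.le 6) hp6]
  have t4 : 0 ≤ -(16 * ε * (34 * ε ^ 5 + 42 * ε ^ 4 + 113 * ε ^ 3 + 81 * ε ^ 2 - 7 * ε - 7) * m ^ 5) := by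
    have hi := w4 he0 he1
    nlinarith [mul_nonneg (mul_nonneg (by linarith : (0:ℝ) ≤ 16 * ε)
      (by linarith : (0:ℝ) ≤ -(34 * ε ^ 5 + 42 * ε ^ 4 + 113 * ε ^ 3 + 81 * ε ^ 2 - 7 * ε - 7)))
      (pow_nonneg hm0.le 5)]
  have t5 : 30 * m ^ 4 ≤ -(16 * (7 * ε ^ 6 + 96 * ε ^ 5 + 75 * ε ^ 4 + 176 * ε ^ 3 + 42 * ε ^ 2 - 10 * ε - 2) * m ^ 4) := by
    nlinarith [w5 he0 he1, pow_nonneg hm0.le 4]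
  have t6 : (-1:ℝ) ≤ 16 * ε * (6 * ε ^ 4 - 75 * ε ^ 3 - 65 * ε ^ 2 - 117 * ε - 5) * m ^ 3 := by
    have hc : -(96/1000000 : ℝ) ≤ 16 * ε * (6 * ε ^ 4 - 75 * ε ^ 3 - 65 * ε ^ 2 - 117 * ε - 5) := by
      nlinarith [w6 he0 he1, mul_nonneg he0.le he0.le]
    nlinarith [lbAux hc (by norm_num) (pow_nonneg hm0.le 3) hp3]
  have t7 : -(128 * m ^ 2) ≤ 16 * (29 * ε ^ 4 - 7 * ε ^ 3 - 48 * ε ^ 2 - 31 * ε - 7) * m ^ 2 := by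
    nlinarith [w7 he0 he1, sq_nonneg m]
  have t8 : -(128 * m) ≤ 32 * (ε - 1) * (7 * ε ^ 2 + 14 * ε + 3) * m := by
    nlinarith [w8 he0 he1, hm0.le]
  have t9 : -(16:ℝ) ≤ -(16 * (ε - 1) ^ 2) := by nlinarith
  have key : (29:ℝ) ≤ 30 * m ^ 4 - 128 * m ^ 2 - 128 * m - 21 := by
    nlinarith [hm9, sq_nonneg m, sq_nonneg (m - 3)]
  linarith


lemma hA6x {m ε : ℝ} (hm1 : 3 ≤ m) (hm2 : m ≤ 7) (he0 : 0 < ε) (he1 : ε < 1/1000000) :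
    (2 * ε ^ 2 * (ε - 1) ^ 2 * (ε + 1) * (2 * ε - 1) * m ^ 7 +
     (ε ^ 2 - ε) * (16 * ε ^ 4 + 58 * ε ^ 3 - 19 * ε ^ 2 - 10 * ε + 3) * m ^ 6 +
     (16 * ε ^ 6 + 72 * ε ^ 5 - 39 * ε ^ 4 - 171 * ε ^ 3 + 42 * ε ^ 2 + 17 * ε - 1) * m ^ 5 +
     2 * (20 * ε ^ 5 - 12 * ε ^ 4 - 113 * ε ^ 3 - 69 * ε ^ 2 + 41 * ε + 5) * m ^ 4 -
     (2 * ε + 1) * (18 * ε ^ 3 + 81 * ε ^ 2 + 80 * ε - 51) * m ^ 3 -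
     4 * (28 * ε ^ 3 + 31 * ε ^ 2 + 20 * ε - 15) * m ^ 2 -
     4 * (11 * ε - 3) * (ε + 1) * m - 8 * (1 - ε)) ≤ 50000 := by
  have hm0 : (0:ℝ) < m := by linarith
  have he : ε ≤ 1 := by linarith
  have hk : ∀ k : ℕ, 2 ≤ k → ε ^ k ≤ ε ^ 2 := fun k hk => pow_le_pow_of_le_one he0.le he hk
  have h3 := hk 3 (by norm_num); have h4 := hk 4 (by norm_num)
  have h5 := hk 5 (by norm_num); have h6 := hk 6 (by norm_num)
  have he2 : ε ^ 2 ≤ 1/1000000 * ε := by nlinarith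
  have hp4 : m ^ 4 ≤ 2401 := by calc m ^ 4 ≤ 7 ^ 4 := pow_le_pow_left₀ hm0.le hm2 4
                                  _ = 2401 := by norm_num
  have hp3 : m ^ 3 ≤ 343 := by calc m ^ 3 ≤ 7 ^ 3 := pow_le_pow_left₀ hm0.le hm2 3
                                  _ = 343 := by norm_num
  have hp2 : m ^ 2 ≤ 49 := by nlinarith
  have s1 : 2 * ε ^ 2 * (ε - 1) ^ 2 * (ε + 1) * (2 * ε - 1) * m ^ 7 ≤ 0 := by
    have hposf : (0:ℝ) ≤ 2 * ε ^ 2 * (ε - 1) ^ 2 * (ε + 1) := by positivity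
    nlinarith [mul_nonneg (mul_nonneg hposf (by linarith : (0:ℝ) ≤ 1 - 2 * ε)) (pow_nonneg hm0.le 7)]
  have s2 : (ε ^ 2 - ε) * (16 * ε ^ 4 + 58 * ε ^ 3 - 19 * ε ^ 2 - 10 * ε + 3) * m ^ 6 ≤ 0 := by
    have hi : 0 ≤ 16 * ε ^ 4 + 58 * ε ^ 3 - 19 * ε ^ 2 - 10 * ε + 3 := by
      nlinarith [pow_nonneg he0.le 4, pow_nonneg he0.le 3]
    have hn : ε ^ 2 - ε ≤ 0 := by nlinarith
    nlinarith [mul_nonneg (mul_nonneg (by linarith : (0:ℝ) ≤ ε - ε ^ 2) hi) (pow_nonneg hm0.le 6)]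
  have s3 : (16 * ε ^ 6 + 72 * ε ^ 5 - 39 * ε ^ 4 - 171 * ε ^ 3 + 42 * ε ^ 2 + 17 * ε - 1) * m ^ 5 ≤ 0 := by
    have hi : 16 * ε ^ 6 + 72 * ε ^ 5 - 39 * ε ^ 4 - 171 * ε ^ 3 + 42 * ε ^ 2 + 17 * ε - 1 ≤ 0 := by
      nlinarith
    nlinarith [mul_nonneg (by linarith : (0:ℝ) ≤ -(16 * ε ^ 6 + 72 * ε ^ 5 - 39 * ε ^ 4 - 171 * ε ^ 3 + 42 * ε ^ 2 + 17 * ε - 1)) (pow_nonneg hm0.le 5)]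
  have s4 : 2 * (20 * ε ^ 5 - 12 * ε ^ 4 - 113 * ε ^ 3 - 69 * ε ^ 2 + 41 * ε + 5) * m ^ 4 ≤ 28812 := by
    have hi : 20 * ε ^ 5 - 12 * ε ^ 4 - 113 * ε ^ 3 - 69 * ε ^ 2 + 41 * ε + 5 ≤ 6 := by nlinarith
    have hi0 : 0 ≤ 20 * ε ^ 5 - 12 * ε ^ 4 - 113 * ε ^ 3 - 69 * ε ^ 2 + 41 * ε + 5 := by nlinarith
    nlinarith [pow_nonneg hm0.le 4, mul_nonneg hi0 (by linarith : (0:ℝ) ≤ 2401 - m ^ 4)]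
  have s5 : -((2 * ε + 1) * (18 * ε ^ 3 + 81 * ε ^ 2 + 80 * ε - 51) * m ^ 3) ≤ 17836 := by
    have hi : -52 ≤ (2 * ε + 1) * (18 * ε ^ 3 + 81 * ε ^ 2 + 80 * ε - 51) := by nlinarith
    have hi2 : (2 * ε + 1) * (18 * ε ^ 3 + 81 * ε ^ 2 + 80 * ε - 51) ≤ 0 := by nlinarith
    nlinarith [pow_nonneg hm0.le 3, mul_nonneg (by linarith : (0:ℝ) ≤ -((2 * ε + 1) * (18 * ε ^ 3 + 81 * ε ^ 2 + 80 * ε - 51))) (by linarith : (0:ℝ) ≤ 343 - m ^ 3)]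
  have s6 : -(4 * (28 * ε ^ 3 + 31 * ε ^ 2 + 20 * ε - 15) * m ^ 2) ≤ 2940 := by
    have hi : -15 ≤ 28 * ε ^ 3 + 31 * ε ^ 2 + 20 * ε - 15 := by nlinarith [pow_nonneg he0.le 3, sq_nonneg ε]
    have hi2 : 28 * ε ^ 3 + 31 * ε ^ 2 + 20 * ε - 15 ≤ 0 := by nlinarith
    nlinarith [sq_nonneg m, mul_nonneg (by linarith : (0:ℝ) ≤ -(28 * ε ^ 3 + 31 * ε ^ 2 + 20 * ε - 15)) (by linarith : (0:ℝ) ≤ 49 - m ^ 2)]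
  have s7 : -(4 * (11 * ε - 3) * (ε + 1) * m) ≤ 112 := by
    have hi : -4 ≤ (11 * ε - 3) * (ε + 1) := by nlinarith
    have hi2 : (11 * ε - 3) * (ε + 1) ≤ 0 := by nlinarith
    nlinarith [mul_nonneg (by linarith : (0:ℝ) ≤ -((11 * ε - 3) * (ε + 1))) (by linarith : (0:ℝ) ≤ 7 - m)]
  have s8 : -(8 * (1 - ε)) ≤ 0 := by nlinarith
  linarith

lemma hBx {m ε : ℝ} (hm1 : 3 ≤ m) (hm2 : m ≤ 7) (he0 : 0 < ε) (he1 : ε < 1/1000000) :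
    0 ≤ ε * (59 * ε ^ 3 - 9 * ε ^ 2 + 17 * ε - 3) * m ^ 4 +
     4 * ε * (15 * ε ^ 3 + 15 * ε ^ 2 + 17 * ε + 1) * m ^ 3 +
     4 * (ε + 2) * (ε ^ 3 + 9 * ε ^ 2 + 5 * ε + 1) * m ^ 2 -
     8 * (2 * ε ^ 3 - 3 * ε ^ 2 - 4 * ε - 3) * m - 8 * (ε - 1) * (ε + 2) := by
  have hm0 : (0:ℝ) ≤ m := by linarith
  have hm4 : m ^ 4 ≤ 2401 := by
    calc m ^ 4 ≤ 7 ^ 4 := pow_le_pow_left₀ hm0 hm2 4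
    _ = 2401 := by norm_num
  have he : ε ≤ 1 := by linarith
  have hm9 : (9:ℝ) ≤ m ^ 2 := by nlinarith
  have t1 : ε * (59 * ε ^ 3 - 9 * ε ^ 2 + 17 * ε - 3) * m ^ 4 ≥ -1 := by
    have h : 59 * ε ^ 3 - 9 * ε ^ 2 + 17 * ε - 3 ≥ -3 := by nlinarith
    have h2 : ε * (59 * ε ^ 3 - 9 * ε ^ 2 + 17 * ε - 3) ≥ -3 * ε := by nlinarith
    nlinarith [pow_nonneg hm0 4, mul_nonneg (mul_nonneg he0.le he0.le) (pow_nonneg hm0 4)]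
  have t2 : 0 ≤ 4 * ε * (15 * ε ^ 3 + 15 * ε ^ 2 + 17 * ε + 1) * m ^ 3 := by positivity
  have t3 : 72 ≤ 4 * (ε + 2) * (ε ^ 3 + 9 * ε ^ 2 + 5 * ε + 1) * m ^ 2 := by
    have h1 : (2:ℝ) ≤ ε + 2 := by linarith
    have h2 : (1:ℝ) ≤ ε ^ 3 + 9 * ε ^ 2 + 5 * ε + 1 := by nlinarith [pow_pos he0 3, sq_nonneg ε]
    have h3 : (2:ℝ) ≤ (ε + 2) * (ε ^ 3 + 9 * ε ^ 2 + 5 * ε + 1) := by nlinarith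
    nlinarith [h3, hm9]
  have t4 : 0 ≤ -(8 * (2 * ε ^ 3 - 3 * ε ^ 2 - 4 * ε - 3) * m) := by
    have h : 2 * ε ^ 3 - 3 * ε ^ 2 - 4 * ε - 3 ≤ -1 := by nlinarith
    nlinarith [mul_nonneg hm0 hm0]
  have t5 : 0 ≤ -(8 * (ε - 1) * (ε + 2)) := by nlinarith
  linarith

/-- there exist υ₀ > 0 and ε* > 0 such that for every m ∈ [3,7],
every ε ∈ (0,ε*) and every υ > 0 with P₇(iυ;m,ε) = 0, one has υ < υ₀. -/


theorem imaginary_roots_bounded :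
    ∃ υ₀ > (0:ℝ), ∃ εs > (0:ℝ),
      ∀ m ∈ Set.Icc (3:ℝ) 7, ∀ ε ∈ Set.Ioo (0:ℝ) εs, ∀ υ : ℝ, 0 < υ →
        P7 m ε (Complex.I * υ) = 0 → υ < υ₀ := by
  refine ⟨3000, by norm_num, 1/1000000, by norm_num, ?_⟩
  intro m hm ε hε υ hυ hP
  obtain ⟨hm1, hm2⟩ := hm
  obtain ⟨he0, he1⟩ := hε
  have hA0 : 0 ≤ a0 m ε := by unfold a0; positivity
  have hA2 : a2 m ε ≤ 0 := by
    unfold a2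
    exact mul_nonpos_of_nonpos_of_nonneg (by nlinarith) (hBx hm1 hm2 he0 he1)
  have hA4 : (8:ℝ) ≤ a4 m ε := by
    unfold a4
    nlinarith [hA4x hm1 hm2 he0 he1]
  have hA6 : a6 m ε ≤ 4000000 := by
    unfold a6
    have hS := hA6x hm1 hm2 he0 he1
    nlinarith [mul_le_mul_of_nonneg_left hS (by linarith : (0:ℝ) ≤ m)]
  unfold P7 at hP
  have him : -(a0 m ε * υ^7) + a2 m ε * υ^5 - a4 m ε * υ^3 + a6 m ε * υ = 0 := by
    have h2 := congrArg Complex.im hP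
    simp [Complex.ext_iff, pow_succ, Complex.add_im, Complex.mul_im, Complex.mul_re] at h2
    linarith [h2]
  by_contra hcon
  push_neg at hcon
  have hsq : (9000000:ℝ) ≤ υ ^ 2 := by nlinarith
  have hυ3 : 9000000 * υ ≤ υ ^ 3 := by nlinarith [mul_le_mul_of_nonneg_right hsq hυ.le]
  have h1 : 0 ≤ a0 m ε * υ ^ 7 := mul_nonneg hA0 (by positivity)
  have h2 : a2 m ε * υ ^ 5 ≤ 0 := mul_nonpos_of_nonpos_of_nonneg hA2 (by positivity)
  have h3 : 8 * υ ^ 3 ≤ a4 m ε * υ ^ 3 := by nlinarith [pow_pos hυ 3]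
  have h4 : a6 m ε * υ ≤ 4000000 * υ := by nlinarith
  linarith
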